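/- Let K ⊂ ℝ^N be a convex body containing the origin in its interior and let G ⊂ ℝ^N be a bounded measurable set with positive Lebesgue measure which is uniformly K-dense. Then the function x ↦ max_{y ∈ Ḡ} ‖y − x‖_K is constant for x ranging over ∂G. -/

import Mathlib

open MeasureTheory Set Pointwise
open scoped ENNReal

section Aux

variable {N : ℕ} {K G : Set (EuclideanSpace ℝ (Fin N))}

lemma aux_mem_smul_iff_gauge_le
    (hK_conv : Convex ℝ K) (hK_cl : IsClosed K)
    (hK0 : (0 : EuclideanSpace ℝ (Fin N)) ∈ interior K)
    {r : ℝ} (hr : 0 < r) (z : EuclideanSpace ℝ (Fin N)) :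
    z ∈ r • K ↔ gauge K z ≤ r := by
  have hKnhds : K ∈ nhds (0 : EuclideanSpace ℝ (Fin N)) :=
    mem_interior_iff_mem_nhds.mp hK0
  have h1 : gauge K (r⁻¹ • z) = r⁻¹ * gauge K z := by
    rw [gauge_smul_of_nonneg (by positivity) z, smul_eq_mul]
  have h2 := gauge_le_one_iff_mem_closure hK_conv hKnhds (x := r⁻¹ • z)
  rw [hK_cl.closure_eq] at h2
  rw [mem_smul_set_iff_inv_smul_mem₀ hr.ne', ← h2, h1, inv_mul_le_iff₀ hr, mul_one]

lemma aux_mem_vadd_iff_gauge_le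
    (hK_conv : Convex ℝ K) (hK_cl : IsClosed K)
    (hK0 : (0 : EuclideanSpace ℝ (Fin N)) ∈ interior K)
    {r : ℝ} (hr : 0 < r) (x z : EuclideanSpace ℝ (Fin N)) :
    z ∈ x +ᵥ r • K ↔ gauge K (z - x) ≤ r := by
  rw [Set.mem_vadd_set_iff_neg_vadd_mem, vadd_eq_add, neg_add_eq_sub]
  exact aux_mem_smul_iff_gauge_le hK_conv hK_cl hK0 hr _

lemma aux_isClosed_vadd (hK_conv : Convex ℝ K) (hK_cl : IsClosed K)
    (hK0 : (0 : EuclideanSpace ℝ (Fin N)) ∈ interior K)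
    {r : ℝ} (hr : 0 < r) (x : EuclideanSpace ℝ (Fin N)) :
    IsClosed (x +ᵥ r • K) := by
  have hKnhds : K ∈ nhds (0 : EuclideanSpace ℝ (Fin N)) := mem_interior_iff_mem_nhds.mp hK0
  have hset : x +ᵥ r • K = (fun z => gauge K (z - x)) ⁻¹' Iic r :=
    Set.ext fun z => aux_mem_vadd_iff_gauge_le hK_conv hK_cl hK0 hr x z
  rw [hset]
  exact IsClosed.preimage
    ((continuous_gauge hK_conv hKnhds).comp (continuous_id.sub continuous_const)) isClosed_Iic

lemma aux_exists_local_mass (hG_bdd : Bornology.IsBounded G)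
    (hG_pos : 0 < volume G) :
    ∃ p ∈ closure G, ∀ δ > 0, 0 < volume (G ∩ Metric.ball p δ) := by
  by_contra h
  push_neg at h
  have h' : ∀ p : EuclideanSpace ℝ (Fin N), ∃ δ > 0,
      p ∈ closure G → volume (G ∩ Metric.ball p δ) = 0 := by
    intro p
    by_cases hp : p ∈ closure G
    · obtain ⟨δ, hδ, hδ0⟩ := h p hp
      exact ⟨δ, hδ, fun _ => le_antisymm (by simpa using hδ0) bot_le⟩
    · exact ⟨1, one_pos, fun hc => absurd hc hp⟩
  choose δ hδpos hδ0 using h'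
  have hcomp : IsCompact (closure G) := hG_bdd.isCompact_closure
  obtain ⟨t, ht1, ht2⟩ := hcomp.elim_nhds_subcover (fun p => Metric.ball p (δ p))
    (fun p _ => Metric.ball_mem_nhds p (hδpos p))
  have hsub : G ⊆ ⋃ p ∈ t, G ∩ Metric.ball p (δ p) := by
    intro x hx
    have := ht2 (subset_closure hx)
    simp only [Set.mem_iUnion] at this ⊢
    obtain ⟨p, hp, hxp⟩ := this
    exact ⟨p, hp, hx, hxp⟩
  have hle : volume G ≤ ∑ p ∈ t, volume (G ∩ Metric.ball p (δ p)) :=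
    (measure_mono hsub).trans (measure_biUnion_finset_le _ _)
  rw [Finset.sum_congr rfl (fun p hp => hδ0 p (ht1 p hp))] at hle
  rw [Finset.sum_const_zero] at hle
  exact hG_pos.ne' (le_antisymm hle zero_le)

lemma aux_exists_frontier_local_mass [Nontrivial (EuclideanSpace ℝ (Fin N))]
    (hG_bdd : Bornology.IsBounded G) (hG_pos : 0 < volume G) :
    ∃ q ∈ frontier G, ∀ δ > 0, 0 < volume (G ∩ Metric.ball q δ) := by
  obtain ⟨p, hp, hploc⟩ := aux_exists_local_mass hG_bdd hG_pos
  by_cases hpint : p ∈ interior G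
  · obtain ⟨v, hv⟩ := exists_ne (0 : EuclideanSpace ℝ (Fin N))
    have hvn : 0 < ‖v‖ := norm_pos_iff.mpr hv
    obtain ⟨R, hR⟩ := hG_bdd.subset_closedBall 0
    have hnormle : ∀ y ∈ interior G, ‖y‖ ≤ R := by
      intro y hy
      simpa using hR (interior_subset hy)
    set f : ℝ → EuclideanSpace ℝ (Fin N) := fun t => p + t • v with hf
    have hfc : Continuous f := by fun_prop
    set A : Set ℝ := {t : ℝ | 0 ≤ t ∧ f t ∉ interior G} with hA
    have hAclosed : IsClosed A :=
      isClosed_Ici.inter (isOpen_interior.isClosed_compl.preimage hfc)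
    have hAne : A.Nonempty := by
      refine ⟨(R + ‖p‖ + 1) / ‖v‖, div_nonneg ?_ hvn.le, fun hc => ?_⟩
      · nlinarith [norm_nonneg p, hnormle p hpint]
      · have h1 : ‖((R + ‖p‖ + 1) / ‖v‖) • v‖ ≤ ‖f ((R + ‖p‖ + 1) / ‖v‖)‖ + ‖p‖ := by
          have := norm_sub_le (f ((R + ‖p‖ + 1) / ‖v‖)) p
          simpa [hf, add_sub_cancel_left] using this
        rw [norm_smul, Real.norm_eq_abs, abs_of_nonneg
          (div_nonneg (by nlinarith [norm_nonneg p, hnormle p hpint]) hvn.le),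
          div_mul_cancel₀ _ hvn.ne'] at h1
        have := hnormle _ hc
        linarith
    have hAbdd : BddBelow A := ⟨0, fun t ht => ht.1⟩
    set s := sInf A with hs
    have hsA : s ∈ A := hAclosed.csInf_mem hAne hAbdd
    have hs0 : 0 ≤ s := hsA.1
    have hsint : f s ∉ interior G := hsA.2
    have hspos : 0 < s := by
      rcases hs0.lt_or_eq with h | h
      · exact h
      · exact absurd (by simpa [hf, ← h] using hpint) hsint
    have hbefore : ∀ t, 0 ≤ t → t < s → f t ∈ interior G := by
      intro t h1 h2
      by_contra hc
      exact absurd (csInf_le hAbdd ⟨h1, hc⟩) (not_le.mpr h2)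
    have key : ∀ δ > 0, ∃ z ∈ interior G, z ∈ Metric.ball (f s) δ := by
      intro δ hδ
      set τ := min s (δ / ‖v‖) with hτ
      have hτpos : 0 < τ := lt_min hspos (div_pos hδ hvn)
      refine ⟨f (s - τ / 2), hbefore _ (by simp only [hτ]; nlinarith [min_le_left s (δ / ‖v‖)])
        (by linarith), ?_⟩
      rw [Metric.mem_ball, dist_eq_norm]
      have heq : f (s - τ / 2) - f s = (-(τ / 2)) • v := by
        show (p + (s - τ / 2) • v) - (p + s • v) = (-(τ / 2)) • v
        module
      rw [heq, norm_smul, Real.norm_eq_abs, abs_of_nonpos (by linarith), neg_neg]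
      have h1 : τ * ‖v‖ ≤ δ := by
        have h2 : τ * ‖v‖ ≤ (δ / ‖v‖) * ‖v‖ :=
          mul_le_mul_of_nonneg_right (min_le_right _ _) hvn.le
        rwa [div_mul_cancel₀ _ hvn.ne'] at h2
      nlinarith
    have hqfront : f s ∈ frontier G := by
      refine ⟨?_, hsint⟩
      rw [Metric.mem_closure_iff]
      intro ε hε
      obtain ⟨z, hz1, hz2⟩ := key ε hε
      exact ⟨z, interior_subset hz1, by rwa [dist_comm, ← Metric.mem_ball]⟩
    refine ⟨f s, hqfront, fun δ hδ => ?_⟩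
    obtain ⟨z, hz1, hz2⟩ := key δ hδ
    have hopen : IsOpen (interior G ∩ Metric.ball (f s) δ) :=
      isOpen_interior.inter Metric.isOpen_ball
    have hpos := hopen.measure_pos volume ⟨z, hz1, hz2⟩
    exact hpos.trans_le (measure_mono (inter_subset_inter_left _ interior_subset))
  · exact ⟨p, ⟨hp, hpint⟩, hploc⟩

lemma aux_frontier_mass [Nontrivial (EuclideanSpace ℝ (Fin N))]
    (hK_conv : Convex ℝ K) (hK_comp : IsCompact K)
    (hK0 : (0 : EuclideanSpace ℝ (Fin N)) ∈ interior K)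
    (hG_bdd : Bornology.IsBounded G) (hG_pos : 0 < volume G)
    (hdense : ∀ r : ℝ, 0 < r → ∀ x ∈ frontier G, ∀ y ∈ frontier G,
      volume (G ∩ (x +ᵥ r • K)) = volume (G ∩ (y +ᵥ r • K))) :
    ∀ z ∈ frontier G, ∀ δ > 0, 0 < volume (G ∩ Metric.ball z δ) := by
  obtain ⟨q, hq, hqloc⟩ := aux_exists_frontier_local_mass hG_bdd hG_pos
  obtain ⟨δ₀, hδ₀, hball⟩ := Metric.mem_nhds_iff.mp (mem_interior_iff_mem_nhds.mp hK0)
  obtain ⟨R, hR⟩ := hK_comp.isBounded.subset_closedBall 0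
  set R' := max R 1 with hR'
  have hR'pos : (0 : ℝ) < R' := lt_of_lt_of_le one_pos (le_max_right _ _)
  have hKR' : K ⊆ Metric.closedBall 0 R' :=
    hR.trans (Metric.closedBall_subset_closedBall (le_max_left _ _))
  intro z hz δ hδ
  set ε := δ / (2 * R') with hε
  have hεpos : 0 < ε := by positivity
  have h1 : G ∩ Metric.ball q (ε * δ₀) ⊆ G ∩ (q +ᵥ ε • K) := by
    rintro w ⟨hwG, hwb⟩
    refine ⟨hwG, ?_⟩
    rw [Set.mem_vadd_set_iff_neg_vadd_mem, vadd_eq_add, neg_add_eq_sub]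
    rw [mem_smul_set_iff_inv_smul_mem₀ hεpos.ne']
    apply hball
    rw [Metric.mem_ball, dist_zero_right, norm_smul, Real.norm_eq_abs,
      abs_of_pos (by positivity)]
    rw [Metric.mem_ball, dist_eq_norm] at hwb
    calc ε⁻¹ * ‖w - q‖ < ε⁻¹ * (ε * δ₀) :=
          mul_lt_mul_of_pos_left hwb (by positivity)
      _ = δ₀ := by field_simp
  have h2 : 0 < volume (G ∩ (q +ᵥ ε • K)) :=
    lt_of_lt_of_le (hqloc (ε * δ₀) (by positivity)) (measure_mono h1)
  rw [hdense ε hεpos q hq z hz] at h2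
  refine h2.trans_le (measure_mono ?_)
  rintro w ⟨hwG, hwv⟩
  refine ⟨hwG, ?_⟩
  rw [Set.mem_vadd_set_iff_neg_vadd_mem, vadd_eq_add, neg_add_eq_sub] at hwv
  obtain ⟨k, hk, hkw⟩ := hwv
  have hknorm : ‖k‖ ≤ R' := by simpa using hKR' hk
  rw [Metric.mem_ball, dist_eq_norm, ← hkw, norm_smul, Real.norm_eq_abs,
    abs_of_pos hεpos]
  calc ε * ‖k‖ ≤ ε * R' := mul_le_mul_of_nonneg_left hknorm hεpos.le
    _ = δ / 2 := by rw [hε]; field_simp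
    _ < δ := by linarith

lemma aux_sSup_eq
    (hK_conv : Convex ℝ K) (hK_comp : IsCompact K)
    (hK0 : (0 : EuclideanSpace ℝ (Fin N)) ∈ interior K)
    (hG_bdd : Bornology.IsBounded G)
    (hloc : ∀ z ∈ frontier G, ∀ δ > 0, 0 < volume (G ∩ Metric.ball z δ))
    {x : EuclideanSpace ℝ (Fin N)} (hx : x ∈ frontier G) :
    sSup ((fun y => gauge K (y - x)) '' closure G) =
      sInf {r : ℝ | 0 < r ∧ volume (G \ (x +ᵥ r • K)) = 0} := by
  have hK_cl : IsClosed K := hK_comp.isClosed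
  have hKnhds : K ∈ nhds (0 : EuclideanSpace ℝ (Fin N)) := mem_interior_iff_mem_nhds.mp hK0
  obtain ⟨δ₀, hδ₀, hball⟩ := Metric.mem_nhds_iff.mp hKnhds
  have hxcl : x ∈ closure G := hx.1
  have hgb : ∀ w : EuclideanSpace ℝ (Fin N), gauge K w ≤ ‖w‖ / δ₀ := by
    intro w
    have h1 : gauge K w ≤ gauge (Metric.ball (0 : EuclideanSpace ℝ (Fin N)) δ₀) w :=
      gauge_mono (absorbent_nhds_zero (Metric.ball_mem_nhds _ hδ₀)) hball w
    rwa [gauge_ball hδ₀.le] at h1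
  obtain ⟨RG, hRG⟩ := hG_bdd.closure.subset_closedBall 0
  have hRG0 : 0 ≤ RG := by
    have := hRG hxcl
    simp only [Metric.mem_closedBall, dist_zero_right] at this
    exact le_trans (norm_nonneg _) this
  set M₀ : ℝ := 2 * RG / δ₀ with hM₀
  have hub : ∀ a ∈ (fun y => gauge K (y - x)) '' closure G, a ≤ M₀ := by
    rintro a ⟨y, hy, rfl⟩
    refine (hgb _).trans ?_
    have h1 : ‖y‖ ≤ RG := by simpa using hRG hy
    have h2 : ‖x‖ ≤ RG := by simpa using hRG hxcl
    have h3 : ‖y - x‖ ≤ 2 * RG := by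
      calc ‖y - x‖ ≤ ‖y‖ + ‖x‖ := norm_sub_le _ _
        _ ≤ 2 * RG := by linarith
    rw [hM₀]
    gcongr
  have hne : ((fun y => gauge K (y - x)) '' closure G).Nonempty :=
    ⟨gauge K (x - x), ⟨x, hxcl, rfl⟩⟩
  have hbdd : BddAbove ((fun y => gauge K (y - x)) '' closure G) := ⟨M₀, hub⟩
  set S : Set ℝ := {r : ℝ | 0 < r ∧ volume (G \ (x +ᵥ r • K)) = 0} with hS
  have hM₀0 : 0 ≤ M₀ := by positivity
  have hSmem : ∀ r : ℝ, M₀ < r → r ∈ S := by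
    intro r hr
    have hrpos : 0 < r := lt_of_le_of_lt hM₀0 hr
    refine ⟨hrpos, ?_⟩
    have : G \ (x +ᵥ r • K) = ∅ := by
      rw [diff_eq_empty]
      intro y hy
      rw [aux_mem_vadd_iff_gauge_le hK_conv hK_cl hK0 hrpos]
      exact le_of_lt (lt_of_le_of_lt (hub _ ⟨y, subset_closure hy, rfl⟩) hr)
    rw [this, measure_empty]
  have hSne : S.Nonempty := ⟨M₀ + 1, hSmem _ (by linarith)⟩
  have hSbdd : BddBelow S := ⟨0, fun r hr => hr.1.le⟩
  apply le_antisymm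
  · refine le_csInf hSne fun r hr => csSup_le hne ?_
    rintro a ⟨y, hy, rfl⟩
    by_contra hlt
    push_neg at hlt
    have hcont : Continuous fun z : EuclideanSpace ℝ (Fin N) => gauge K (z - x) :=
      (continuous_gauge hK_conv hKnhds).comp (continuous_id.sub continuous_const)
    have hopen : IsOpen {z : EuclideanSpace ℝ (Fin N) | r < gauge K (z - x)} :=
      isOpen_lt continuous_const hcont
    have hsub : ∀ z ∈ {z : EuclideanSpace ℝ (Fin N) | r < gauge K (z - x)},
        z ∉ x +ᵥ r • K := by
      intro z hz hmem
      rw [aux_mem_vadd_iff_gauge_le hK_conv hK_cl hK0 hr.1] at hmem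
      exact absurd hmem (not_le.mpr hz)
    have hpos : 0 < volume (G \ (x +ᵥ r • K)) := by
      by_cases hyint : y ∈ interior G
      · have hV : IsOpen (interior G ∩ {z : EuclideanSpace ℝ (Fin N) | r < gauge K (z - x)}) :=
          isOpen_interior.inter hopen
        have hVpos := hV.measure_pos volume ⟨y, hyint, hlt⟩
        refine hVpos.trans_le (measure_mono ?_)
        rintro z ⟨hz1, hz2⟩
        exact ⟨interior_subset hz1, hsub z hz2⟩
      · have hyfr : y ∈ frontier G := ⟨hy, hyint⟩
        obtain ⟨δ, hδpos, hδsub⟩ := Metric.isOpen_iff.mp hopen y hlt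
        refine (hloc y hyfr δ hδpos).trans_le (measure_mono ?_)
        rintro z ⟨hz1, hz2⟩
        exact ⟨hz1, hsub z (hδsub hz2)⟩
    exact hpos.ne' hr.2
  · set M := sSup ((fun y => gauge K (y - x)) '' closure G) with hM
    have hM0 : 0 ≤ M := le_trans (gauge_nonneg _) (le_csSup hbdd ⟨x, hxcl, rfl⟩)
    have hclaim : ∀ r : ℝ, M < r → sInf S ≤ r := by
      intro r hr
      refine csInf_le hSbdd ⟨lt_of_le_of_lt hM0 hr, ?_⟩
      have : G \ (x +ᵥ r • K) = ∅ := by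
        rw [diff_eq_empty]
        intro y hy
        rw [aux_mem_vadd_iff_gauge_le hK_conv hK_cl hK0 (lt_of_le_of_lt hM0 hr)]
        exact le_of_lt (lt_of_le_of_lt (le_csSup hbdd ⟨y, subset_closure hy, rfl⟩) hr)
      rw [this, measure_empty]
    by_contra hcon
    push_neg at hcon
    have := hclaim ((M + sInf S) / 2) (by linarith)
    linarith

end Aux

/-- **Corollary 2.4.** If `K ⊂ ℝ^N` is a convex body containing the origin in its interior
and `G ⊂ ℝ^N` is a bounded measurable set of positive Lebesgue measure which is uniformly
`K`-dense, then the function `x ↦ max_{y ∈ Ḡ} ‖y - x‖_K` is constant on `∂G`. -/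
theorem K_dense_max_gauge_constant
    (N : ℕ) (K G : Set (EuclideanSpace ℝ (Fin N)))
    (hK_conv : Convex ℝ K) (hK_comp : IsCompact K)
    (hK0 : (0 : EuclideanSpace ℝ (Fin N)) ∈ interior K)
    (hG_meas : MeasurableSet G) (hG_bdd : Bornology.IsBounded G)
    (hG_pos : 0 < volume G)
    (hdense : ∀ r : ℝ, 0 < r → ∀ x ∈ frontier G, ∀ y ∈ frontier G,
      volume (G ∩ (x +ᵥ r • K)) = volume (G ∩ (y +ᵥ r • K))) :
    ∀ x ∈ frontier G, ∀ x' ∈ frontier G,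
      sSup ((fun y => gauge K (y - x)) '' closure G) =
        sSup ((fun y => gauge K (y - x')) '' closure G) := by
  intro x hx x' hx'
  rcases subsingleton_or_nontrivial (EuclideanSpace ℝ (Fin N)) with hsub | hnt
  · exfalso
    rcases G.eq_empty_or_nonempty with rfl | ⟨g, hg⟩
    · simp at hx
    · have hGu : G = univ := eq_univ_of_forall fun z => by rwa [Subsingleton.elim z g]
      rw [hGu, frontier_univ] at hx
      exact hx
  · have hK_cl : IsClosed K := hK_comp.isClosed
    have hloc := aux_frontier_mass hK_conv hK_comp hK0 hG_bdd hG_pos hdense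
    rw [aux_sSup_eq hK_conv hK_comp hK0 hG_bdd hloc hx,
        aux_sSup_eq hK_conv hK_comp hK0 hG_bdd hloc hx']
    have hdiff : ∀ r : ℝ, 0 < r →
        volume (G \ (x +ᵥ r • K)) = volume (G \ (x' +ᵥ r • K)) := by
      intro r hr
      have hA : MeasurableSet (x +ᵥ r • K) :=
        (aux_isClosed_vadd hK_conv hK_cl hK0 hr x).measurableSet
      have hA' : MeasurableSet (x' +ᵥ r • K) :=
        (aux_isClosed_vadd hK_conv hK_cl hK0 hr x').measurableSet
      have h1 := measure_inter_add_diff (μ := volume) G hA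
      have h2 := measure_inter_add_diff (μ := volume) G hA'
      have heq := hdense r hr x hx x' hx'
      rw [← heq] at h2
      have hfin : volume (G ∩ (x +ᵥ r • K)) ≠ ⊤ :=
        (lt_of_le_of_lt (measure_mono inter_subset_left) hG_bdd.measure_lt_top).ne
      exact (ENNReal.add_right_inj hfin).mp (h1.trans h2.symm)
    congr 1
    ext r
    simp only [mem_setOf_eq]
    constructor
    · rintro ⟨h1, h2⟩
      exact ⟨h1, (hdiff r h1).symm.trans h2⟩
    · rintro ⟨h1, h2⟩
      exact ⟨h1, (hdiff r h1).trans h2⟩
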